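/- Define s : Γ(TM ⊕ T*M) → 𝔜 by s(X, α) = (t ↦ tX, α) (i.e. the family of vector fields X_t = tX and the constant family of 1-forms α). Then s is a section of φ(X_t,α_t) = (X_1, ∫₀¹α_t dt) and is compatible with the brackets: s([(X,ξ),(Y,η)]_{Dorfman}) = [s(X,ξ), s(Y,η)]_𝔜. -/

import Mathlib

/-- The bracket `[(X_t,α_t),(Y_t,β_t)] = ([X₁,Y_t], L_{X₁}β_t − i_{Ẏ_t} d∫₀¹α_s ds)`. -/
noncomputable def brk {V Ω1 Ω2 : Type*}
    [NormedAddCommGroup V] [NormedSpace ℝ V]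
    [NormedAddCommGroup Ω1] [NormedSpace ℝ Ω1]
    [NormedAddCommGroup Ω2] [NormedSpace ℝ Ω2]
    (br : V →L[ℝ] V →L[ℝ] V) (L1 : V →L[ℝ] Ω1 →L[ℝ] Ω1)
    (ι : V →L[ℝ] Ω2 →L[ℝ] Ω1) (d : Ω1 →L[ℝ] Ω2)
    (a b : (ℝ → V) × (ℝ → Ω1)) : (ℝ → V) × (ℝ → Ω1) :=
  (fun t => br (a.1 1) (b.1 t),
   fun t => L1 (a.1 1) (b.2 t) - ι (deriv b.1 t) (d (∫ s in (0:ℝ)..1, a.2 s)))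

/-- The Dorfman bracket `[(X,ξ),(Y,η)] = ([X,Y], L_X η − i_Y dξ)`. -/
noncomputable def dor {V Ω1 Ω2 : Type*}
    [NormedAddCommGroup V] [NormedSpace ℝ V]
    [NormedAddCommGroup Ω1] [NormedSpace ℝ Ω1]
    [NormedAddCommGroup Ω2] [NormedSpace ℝ Ω2]
    (br : V →L[ℝ] V →L[ℝ] V) (L1 : V →L[ℝ] Ω1 →L[ℝ] Ω1)
    (ι : V →L[ℝ] Ω2 →L[ℝ] Ω1) (d : Ω1 →L[ℝ] Ω2)
    (a b : V × Ω1) : V × Ω1 :=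
  (br a.1 b.1, L1 a.1 b.2 - ι b.1 (d a.2))

/-- The section `s(X,α) = (t ↦ tX, α)`. -/
def sec {V Ω1 : Type*}
    [NormedAddCommGroup V] [NormedSpace ℝ V]
    [NormedAddCommGroup Ω1] [NormedSpace ℝ Ω1]
    (X : V) (α : Ω1) : (ℝ → V) × (ℝ → Ω1) :=
  (fun t : ℝ => t • X, fun _ : ℝ => α)

/-- `s(X,α) = (t ↦ tX, α)` is a section of `φ(X_t,α_t) = (X₁, ∫₀¹α_t dt)` compatible
with the brackets: `s([(X,ξ),(Y,η)]_Dorfman) = [s(X,ξ), s(Y,η)]_𝔜`. -/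
theorem stmt8 {V Ω1 Ω2 : Type*}
    [NormedAddCommGroup V] [NormedSpace ℝ V] [CompleteSpace V]
    [NormedAddCommGroup Ω1] [NormedSpace ℝ Ω1] [CompleteSpace Ω1]
    [NormedAddCommGroup Ω2] [NormedSpace ℝ Ω2]
    (br : V →L[ℝ] V →L[ℝ] V) (L1 : V →L[ℝ] Ω1 →L[ℝ] Ω1)
    (ι : V →L[ℝ] Ω2 →L[ℝ] Ω1) (d : Ω1 →L[ℝ] Ω2) :
    ∀ (X Y : V) (ξ η : Ω1),
      (((sec X ξ).1 1 : V), (∫ s in (0:ℝ)..1, (sec X ξ).2 s : Ω1)) = (X, ξ) ∧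
      sec (dor br L1 ι d (X, ξ) (Y, η)).1 (dor br L1 ι d (X, ξ) (Y, η)).2
        = brk br L1 ι d (sec X ξ) (sec Y η) := by
  intro X Y ξ η
  have hderiv : deriv (fun t : ℝ => t • Y) = fun _ => Y := by
    funext t
    simpa using ((hasDerivAt_id t).smul_const Y).deriv
  constructor
  · simp [sec]
  · unfold sec dor brk
    simp only [hderiv]
    refine Prod.ext ?_ ?_
    · funext t
      simp [smul_comm]
    · funext t
      simp
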